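/- Let A_0, A_1 be n×n complex matrices, H : ℕ → ℂ^{n×n} any function, and G : ℕ → ℂ^{n×n} a function satisfying G(2N + ε) = A_ε G(N) + ε H(N) for all N ≥ 1 and ε ∈ {0,1}. Setting H(0) := G(1), for any binary digits ε_0, …, ε_L ∈ {0,1} one has G(Σ_{p=0}^{L} ε_p 2^p) = Σ_{p=0}^{L} ε_p (Π_{j=0}^{p-1} A_{ε_j}) H(Σ_{j=p+1}^{L} ε_j 2^{j−p−1}), where the matrix product is taken in order A_{ε_0} A_{ε_1} ⋯ A_{ε_{p-1}} and empty products are the identity, provided Σ_{p=0}^{L} ε_p 2^p ≥ 1. -/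

import Mathlib

/-- Lemma on 2-recursive matrix-valued functions: explicit digit expansion formula. -/
theorem matrix_recursion_digit_formula (n : ℕ)
    (A : Fin 2 → Matrix (Fin n) (Fin n) ℂ)
    (H G : ℕ → Matrix (Fin n) (Fin n) ℂ)
    (hrec : ∀ N : ℕ, 1 ≤ N → ∀ e : Fin 2,
      G (2 * N + (e : ℕ)) = A e * G N + (e : ℕ) • H N)
    (hH0 : H 0 = G 1)
    (L : ℕ) (ε : ℕ → Fin 2)
    (hpos : 1 ≤ ∑ p ∈ Finset.range (L + 1), ((ε p : ℕ) * 2 ^ p)) :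
    G (∑ p ∈ Finset.range (L + 1), (ε p : ℕ) * 2 ^ p) =
      ∑ p ∈ Finset.range (L + 1), (ε p : ℕ) •
        (((List.range p).map (fun j => A (ε j))).prod *
          H (∑ j ∈ Finset.range (L - p), (ε (p + 1 + j) : ℕ) * 2 ^ j)) := by
  induction L generalizing ε with
  | zero =>
    simp only [Finset.sum_range_succ, Finset.sum_range_zero, pow_zero, mul_one,
      zero_add, Nat.sub_self, Finset.range_zero, Finset.sum_empty, List.range_zero,
      List.map_nil, List.prod_nil, one_mul] at hpos ⊢
    have h1 : (ε 0 : ℕ) = 1 := by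
      have := (ε 0).isLt
      omega
    simp [h1, hH0]
  | succ L ih =>
    have hS : ∑ p ∈ Finset.range (L + 1 + 1), (ε p : ℕ) * 2 ^ p
        = 2 * (∑ p ∈ Finset.range (L + 1), (ε (p + 1) : ℕ) * 2 ^ p) + (ε 0 : ℕ) := by
      rw [Finset.sum_range_succ', Finset.mul_sum]
      simp only [pow_zero, mul_one, pow_succ]
      congr 1
      apply Finset.sum_congr rfl
      intro p _
      ring
    set S' := ∑ p ∈ Finset.range (L + 1), (ε (p + 1) : ℕ) * 2 ^ p with hS'def
    rcases Nat.eq_zero_or_pos S' with h0 | h1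
    · -- all higher digits are zero
      have hz : ∀ p, p ≤ L → (ε (p + 1) : ℕ) = 0 := by
        intro p hp
        have h2 := (Finset.sum_eq_zero_iff).mp h0 p (Finset.mem_range.mpr (by omega))
        have h3 : 0 < 2 ^ p := Nat.pow_pos (by norm_num)
        exact (Nat.mul_eq_zero.mp h2).resolve_right (by omega)
      have he0 : (ε 0 : ℕ) = 1 := by
        have := (ε 0).isLt
        rw [hS, h0] at hpos
        omega
      rw [hS, h0, mul_zero, zero_add, he0, Finset.sum_range_succ' _ (L + 1)]
      have hterm : ∀ p ∈ Finset.range (L + 1),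
          ((ε (p + 1) : ℕ)) • (((List.range (p + 1)).map (fun j => A (ε j))).prod *
            H (∑ j ∈ Finset.range (L + 1 - (p + 1)), (ε (p + 1 + 1 + j) : ℕ) * 2 ^ j)) = 0 := by
        intro p hp
        rw [hz p (by simpa using Nat.lt_succ_iff.mp (Finset.mem_range.mp hp))]
        simp
      rw [Finset.sum_eq_zero hterm, zero_add]
      have hin : ∑ j ∈ Finset.range (L + 1 - 0), (ε (0 + 1 + j) : ℕ) * 2 ^ j = 0 := by
        apply Finset.sum_eq_zero
        intro j hj
        have hj' := Finset.mem_range.mp hj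
        have h4 : (0 + 1 + j) = j + 1 := by omega
        rw [h4, hz j (by omega)]
        ring
      rw [hin]
      simp [he0, hH0]
    · -- main case
      have hrw := hrec S' h1 (ε 0)
      have hIH := ih (fun p => ε (p + 1)) h1
      rw [hS, hrw, hIH, Finset.mul_sum, Finset.sum_range_succ' _ (L + 1)]
      congr 1
      · apply Finset.sum_congr rfl
        intro p _
        beta_reduce
        have hsum : (∑ j ∈ Finset.range (L + 1 - (p + 1)), (ε (p + 1 + 1 + j) : ℕ) * 2 ^ j)
            = ∑ j ∈ Finset.range (L - p), (ε (p + 1 + j + 1) : ℕ) * 2 ^ j := by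
          apply Finset.sum_congr
          · congr 1
            omega
          · intro j _
            have h5 : p + 1 + 1 + j = p + 1 + j + 1 := by omega
            rw [h5]
        have hfun : ((fun j => A (ε j)) ∘ Nat.succ) = (fun j => A (ε (j + 1))) := rfl
        rw [List.range_succ_eq_map, List.map_cons, List.prod_cons, List.map_map, hfun,
          mul_smul_comm, mul_assoc, hsum]
      · simp only [List.range_zero, List.map_nil, List.prod_nil, one_mul, Nat.sub_zero]
        have h7 : (∑ j ∈ Finset.range (L + 1), (ε (0 + 1 + j) : ℕ) * 2 ^ j)
            = ∑ p ∈ Finset.range (L + 1), (ε (p + 1) : ℕ) * 2 ^ p := by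
          apply Finset.sum_congr rfl
          intro j _
          have h6 : 0 + 1 + j = j + 1 := by omega
          rw [h6]
        rw [h7]
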